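/- arXiv:0811.3975 — 2 statements merged into one kernel-verified Lean document; each statement's English description precedes it below -/
import Mathlib

section
/- Let δ be an initial distribution with support L and σ a strategy of player 1 such that γ₁(δ,σ,τ) = 1 for every strategy τ of player 2 (i.e., σ and δ are almost-surely winning for player 1). Then for every strategy τ, every n ≥ 1 and every play (k₁,c₁,d₁,…,kₙ₊₁) of length n+1 with positive probability under δ, σ, τ: either the support B₁ᵖ(L,c₁,…,cₙ) is almost-surely winning for player 1, or k_m ∈ T for some 1 ≤ m ≤ n. -/
open scoped Classical

noncomputable section

/-- A probability distribution on a finite type, given by a nonnegative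
real-valued density summing to `1`. -/
structure FDist (X : Type*) [Fintype X] where
  f : X → ℝ
  nonneg : ∀ x, 0 ≤ f x
  sum_one : ∑ x, f x = 1

/-- The support of a distribution: the set of points with positive probability. -/
def FDist.support {X : Type*} [Fintype X] (δ : FDist X) : Finset X :=
  Finset.univ.filter fun x => 0 < δ.f x

/-- The uniform distribution on a nonempty finite set. -/
def uniform {X : Type*} [Fintype X] (L : Finset X) (hL : L.Nonempty) : FDist X where
  f x := if x ∈ L then (L.card : ℝ)⁻¹ else 0
  nonneg x := by split_ifs <;> positivity
  sum_one := by
    rw [Finset.sum_ite_mem, Finset.univ_inter, Finset.sum_const, nsmul_eq_mul,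
      mul_inv_cancel₀]
    exact_mod_cast (Finset.card_pos.mpr hL).ne'

/-- Uniform distribution on `L`, defaulting to the uniform distribution on the
whole type when `L` is empty. -/
def uniformD {X : Type*} [Fintype X] [Nonempty X] (L : Finset X) : FDist X :=
  if h : L.Nonempty then uniform L h else uniform Finset.univ Finset.univ_nonempty

/-- The Dirac distribution on a point. -/
def dirac {X : Type*} [Fintype X] (x : X) : FDist X where
  f y := if y = x then 1 else 0
  nonneg y := by by_cases h : y = x <;> simp [h]
  sum_one := by simp

/-- A stochastic game with partial observation on both sides and a reachability
objective for player 1: states `K`, actions `I`, `J`, signals `C`, `D`, target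
states `T`, transition probabilities `p`, and actions encoded in signals via
`act₁`, `act₂`. -/
structure Game (K I J C D : Type*) [Fintype K] [Fintype I] [Fintype J] [Fintype C] [Fintype D] where
  T : Finset K
  p : K → I → J → C × D × K → ℝ
  p_nonneg : ∀ k i j x, 0 ≤ p k i j x
  p_sum : ∀ k i j, ∑ x : C × D × K, p k i j x = 1
  act₁ : C → I
  act₂ : D → J
  act_compat : ∀ k i j c d l, 0 < p k i j (c, d, l) → i = act₁ c ∧ j = act₂ d

/-- A (behavioral) strategy of player 1: a distribution on actions for each
finite sequence of received signals. -/
abbrev Strategy1 (I C : Type*) [Fintype I] : Type _ := List C → FDist I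

/-- A (behavioral) strategy of player 2. -/
abbrev Strategy2 (J D : Type*) [Fintype J] : Type _ := List D → FDist J

/-- A play with `n+1` states: the initial state followed by `n` steps, each
consisting of a signal for player 1, a signal for player 2 and the next state. -/
structure Hist (K C D : Type*) (n : ℕ) where
  first : K
  steps : Fin n → C × D × K

instance (K C D : Type*) [Fintype K] [Fintype C] [Fintype D] (n : ℕ) :
    Fintype (Hist K C D n) :=
  Fintype.ofEquiv (K × (Fin n → C × D × K))
    { toFun := fun x => ⟨x.1, x.2⟩
      invFun := fun h => (h.first, h.steps)
      left_inv := fun _ => rfl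
      right_inv := fun _ => rfl }

namespace Hist

variable {K C D : Type*}

/-- The last state of a play. -/
def last : ∀ {n : ℕ}, Hist K C D n → K
  | 0, h => h.first
  | n + 1, h => (h.steps (Fin.last n)).2.2

/-- The play obtained by removing the last step. -/
def init {n : ℕ} (h : Hist K C D (n + 1)) : Hist K C D n :=
  ⟨h.first, fun m => h.steps m.castSucc⟩

/-- The `m`-th state of a play, `0`-indexed: `state h 0` is the initial state
(called `k₁` in `1`-indexed notation). -/
def state {n : ℕ} (h : Hist K C D n) (m : Fin (n + 1)) : K :=
  if hm : m.val = 0 then h.first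
  else (h.steps ⟨m.val - 1, by have := m.isLt; omega⟩).2.2

/-- The sequence of signals received by player 1 along the play. -/
def sig1 {n : ℕ} (h : Hist K C D n) : List C := List.ofFn fun m => (h.steps m).1

/-- The sequence of signals received by player 2 along the play. -/
def sig2 {n : ℕ} (h : Hist K C D n) : List D := List.ofFn fun m => (h.steps m).2.1

/-- The play visits the target set `T`. -/
def visits (T : Finset K) {n : ℕ} (h : Hist K C D n) : Prop :=
  ∃ m : Fin (n + 1), h.state m ∈ T

end Hist

namespace Game

variable {K I J C D : Type*} [Fintype K] [Fintype I] [Fintype J] [Fintype C] [Fintype D]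

/-- The probability of a given play of `n` steps, under initial distribution `δ`
and strategies `σ`, `τ`. -/
def playProb (G : Game K I J C D) (δ : FDist K) (σ : Strategy1 I C) (τ : Strategy2 J D) :
    ∀ n : ℕ, Hist K C D n → ℝ
  | 0, h => δ.f h.first
  | n + 1, h =>
      G.playProb δ σ τ n h.init *
        ∑ i : I, ∑ j : J,
          (σ h.init.sig1).f i * (τ h.init.sig2).f j *
            G.p h.init.last i j (h.steps (Fin.last n))

/-- The probability that a play with `n+1` states visits the target set. -/
def reachProb (G : Game K I J C D) (δ : FDist K) (σ : Strategy1 I C)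
    (τ : Strategy2 J D) (n : ℕ) : ℝ :=
  ∑ h : Hist K C D n, if h.visits G.T then G.playProb δ σ τ n h else 0

/-- The reachability probability `γ₁(δ,σ,τ)`: the supremum over horizons of the
probability that the play visits the target set. -/
def val (G : Game K I J C D) (δ : FDist K) (σ : Strategy1 I C) (τ : Strategy2 J D) : ℝ :=
  ⨆ n : ℕ, G.reachProb δ σ τ n

/-- `δ` is almost-surely winning for player 1. -/
def AlmostSureWin1 (G : Game K I J C D) (δ : FDist K) : Prop :=
  ∃ σ, ∀ τ, G.val δ σ τ = 1

/-- `δ` is positively winning for player 1. -/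
def PositiveWin1 (G : Game K I J C D) (δ : FDist K) : Prop :=
  ∃ σ, ∀ τ, 0 < G.val δ σ τ

/-- `δ` is positively winning for player 2. -/
def PositiveWin2 (G : Game K I J C D) (δ : FDist K) : Prop :=
  ∃ τ, ∀ σ, G.val δ σ τ < 1

/-- `δ` is surely (equivalently here, almost-surely) winning for player 2. -/
def SureWin2 (G : Game K I J C D) (δ : FDist K) : Prop :=
  ∃ τ, ∀ σ, G.val δ σ τ = 0

/-- One-step belief operator of player 1. -/
def B1 (G : Game K I J C D) (L : Finset K) (c : C) : Finset K :=
  Finset.univ.filter fun k => ∃ l ∈ L, ∃ d : D, 0 < G.p l (G.act₁ c) (G.act₂ d) (c, d, k)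

/-- One-step belief operator of player 2. -/
def B2 (G : Game K I J C D) (L : Finset K) (d : D) : Finset K :=
  Finset.univ.filter fun k => ∃ l ∈ L, ∃ c : C, 0 < G.p l (G.act₁ c) (G.act₂ d) (c, d, k)

/-- Belief of player 1 after a sequence of signals. -/
def B1seq (G : Game K I J C D) (L : Finset K) (cs : List C) : Finset K := cs.foldl G.B1 L

/-- Belief of player 2 after a sequence of signals. -/
def B2seq (G : Game K I J C D) (L : Finset K) (ds : List D) : Finset K := ds.foldl G.B2 L

/-- One-step pessimistic belief operator of player 1. -/
def B1p (G : Game K I J C D) (L : Finset K) (c : C) : Finset K := G.B1 (L \ G.T) c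

/-- One-step pessimistic belief operator of player 2. -/
def B2p (G : Game K I J C D) (L : Finset K) (d : D) : Finset K := G.B2 (L \ G.T) d

/-- Pessimistic belief of player 1 after a sequence of signals. -/
def B1pseq (G : Game K I J C D) (L : Finset K) (cs : List C) : Finset K := cs.foldl G.B1p L

/-- Pessimistic belief of player 2 after a sequence of signals. -/
def B2pseq (G : Game K I J C D) (L : Finset K) (ds : List D) : Finset K := ds.foldl G.B2p L

/-- The operator `Φ` on collections of subsets of `K ∖ T`. -/
def Phi (G : Game K I J C D) (𝓛 : Set (Finset K)) : Set (Finset K) :=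
  {L | L ∈ 𝓛 ∧ L ∩ G.T = ∅ ∧ ∃ j : J, ∀ d : D, G.act₂ d = j → G.B2 L d ∈ 𝓛}

theorem Phi_mono (G : Game K I J C D) : Monotone G.Phi := by
  intro A B hAB L hL
  obtain ⟨h1, h2, j, hj⟩ := hL
  exact ⟨hAB h1, h2, j, fun d hd => hAB (hj d hd)⟩

/-- `𝓛_∞`, the greatest fixpoint of `Φ`. -/
def Linf (G : Game K I J C D) : Set (Finset K) :=
  OrderHom.gfp ⟨G.Phi, G.Phi_mono⟩

/-- The winning condition of the `𝓛`-game for player 1, on a play with initial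
support `L`: some state `k_m` is a target state and all earlier pessimistic
beliefs of player 1 avoid `𝓛`. -/
def LWin (G : Game K I J C D) (𝓛 : Set (Finset K)) (L : Finset K) {n : ℕ}
    (h : Hist K C D n) : Prop :=
  ∃ m : Fin (n + 1), h.state m ∈ G.T ∧
    ∀ r : ℕ, 1 ≤ r → r ≤ m.val → G.B1pseq L (h.sig1.take r) ∉ 𝓛

/-- The payoff `γ₁^𝓛(δ,σ,τ)` of player 1 in the `𝓛`-game, for an initial
distribution `δ` with support `L`. -/
def Lval (G : Game K I J C D) (𝓛 : Set (Finset K)) (L : Finset K) (δ : FDist K)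
    (σ : Strategy1 I C) (τ : Strategy2 J D) : ℝ :=
  ⨆ n : ℕ, ∑ h : Hist K C D n, if G.LWin 𝓛 L h then G.playProb δ σ τ n h else 0

end Game

/-- The uniformly random strategy `σ_R` of player 1. -/
def randomStrat (I C : Type*) [Fintype I] [Nonempty I] : Strategy1 I C :=
  fun _ => uniform Finset.univ Finset.univ_nonempty
variable {K I J C D : Type*} [Fintype K] [Fintype I] [Fintype J] [Fintype C] [Fintype D]
  [Nonempty K] [Nonempty I] [Nonempty J] [Nonempty C] [Nonempty D]

/-! ### Histories: snoc and cons -/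

namespace Hist

variable {K C D : Type*} {n : ℕ}

theorem ext' {h g : Hist K C D n} (h1 : h.first = g.first) (h2 : h.steps = g.steps) :
    h = g := by cases h; cases g; cases h1; cases h2; rfl

/-- Append a step at the end of a history. -/
def snoc (g : Hist K C D n) (x : C × D × K) : Hist K C D (n + 1) :=
  ⟨g.first, Fin.snoc g.steps x⟩

/-- Prepend a step at the beginning of a history. -/
def cons (k : K) (c : C) (d : D) (g : Hist K C D n) : Hist K C D (n + 1) :=
  ⟨k, Fin.cons (c, d, g.first) g.steps⟩

@[simp] theorem snoc_steps (g : Hist K C D n) (x : C × D × K) :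
    (g.snoc x).steps = Fin.snoc (α := fun _ => C × D × K) g.steps x := rfl

@[simp] theorem cons_steps (k : K) (c : C) (d : D) (g : Hist K C D n) :
    (cons k c d g).steps = Fin.cons (α := fun _ => C × D × K) (c, d, g.first) g.steps := rfl

@[simp] theorem snoc_first (g : Hist K C D n) (x : C × D × K) :
    (g.snoc x).first = g.first := rfl

@[simp] theorem cons_first (k : K) (c : C) (d : D) (g : Hist K C D n) :
    (cons k c d g).first = k := rfl

theorem init_steps (h : Hist K C D (n + 1)) : h.init.steps = Fin.init h.steps := rfl

@[simp] theorem init_first (h : Hist K C D (n + 1)) : h.init.first = h.first := rfl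

@[simp] theorem init_snoc (g : Hist K C D n) (x : C × D × K) : (g.snoc x).init = g := by
  refine ext' rfl ?_
  rw [init_steps, snoc_steps]
  exact Fin.init_snoc _ _

@[simp] theorem snoc_steps_last (g : Hist K C D n) (x : C × D × K) :
    (g.snoc x).steps (Fin.last n) = x := by
  rw [snoc_steps, Fin.snoc_last]

theorem snoc_init_self (h : Hist K C D (n + 1)) :
    h.init.snoc (h.steps (Fin.last n)) = h := by
  refine ext' rfl ?_
  rw [snoc_steps, init_steps]
  exact Fin.snoc_init_self h.steps

theorem state_init (h : Hist K C D (n + 1)) (m : Fin (n + 1)) :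
    h.init.state m = h.state m.castSucc := by
  simp only [Hist.state, Hist.init, Fin.coe_castSucc, Fin.castSucc_mk]

theorem state_snoc_castSucc (g : Hist K C D n) (x : C × D × K) (m : Fin (n + 1)) :
    (g.snoc x).state m.castSucc = g.state m := by
  rw [← state_init, init_snoc]

theorem last_eq_state (h : Hist K C D n) : h.last = h.state (Fin.last n) := by
  cases n with
  | zero => rfl
  | succ n =>
      show (h.steps (Fin.last n)).2.2 = _
      unfold Hist.state
      rw [dif_neg (by simp [Fin.last])]
      congr 1

theorem sig1_zero (h : Hist K C D 0) : h.sig1 = [] := by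
  simp [Hist.sig1]

theorem sig2_zero (h : Hist K C D 0) : h.sig2 = [] := by
  simp [Hist.sig2]

theorem sig1_snoc (g : Hist K C D n) (x : C × D × K) :
    (g.snoc x).sig1 = g.sig1 ++ [x.1] := by
  unfold Hist.sig1
  rw [List.ofFn_succ']
  simp [List.concat_eq_append]

theorem sig1_eq (h : Hist K C D (n + 1)) :
    h.sig1 = h.init.sig1 ++ [(h.steps (Fin.last n)).1] := by
  conv_lhs => rw [← snoc_init_self h]
  rw [sig1_snoc]

theorem init_cons (k : K) (c : C) (d : D) (g : Hist K C D (n + 1)) :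
    (cons k c d g).init = cons k c d g.init := by
  refine ext' rfl ?_
  funext m
  rw [init_steps]
  show (cons k c d g).steps m.castSucc = _
  rw [cons_steps, cons_steps]
  induction m using Fin.cases with
  | zero => rfl
  | succ r =>
      rw [← Fin.succ_castSucc, Fin.cons_succ, Fin.cons_succ]
      rfl

theorem last_cons (k : K) (c : C) (d : D) (g : Hist K C D n) :
    (cons k c d g).last = g.last := by
  cases n with
  | zero => rfl
  | succ n =>
      show ((cons k c d g).steps (Fin.last (n+1))).2.2 = _
      rw [cons_steps, ← Fin.succ_last, Fin.cons_succ]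
      rfl

theorem cons_steps_last (k : K) (c : C) (d : D) (g : Hist K C D (n + 1)) :
    (cons k c d g).steps (Fin.last (n + 1)) = g.steps (Fin.last n) := by
  rw [cons_steps, ← Fin.succ_last, Fin.cons_succ]

theorem sig1_cons (k : K) (c : C) (d : D) (g : Hist K C D n) :
    (cons k c d g).sig1 = c :: g.sig1 := by
  unfold Hist.sig1
  rw [List.ofFn_succ]
  simp [cons]

theorem sig2_cons (k : K) (c : C) (d : D) (g : Hist K C D n) :
    (cons k c d g).sig2 = d :: g.sig2 := by
  unfold Hist.sig2
  rw [List.ofFn_succ]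
  simp [cons]

theorem state_cons_zero (k : K) (c : C) (d : D) (g : Hist K C D n) :
    (cons k c d g).state 0 = k := by
  simp [Hist.state]

theorem state_cons_succ (k : K) (c : C) (d : D) (g : Hist K C D n) (m : Fin (n + 1)) :
    (cons k c d g).state m.succ = g.state m := by
  unfold Hist.state
  have h1 : ¬ ((m.succ : Fin (n+2)).val = 0) := by simp
  rw [dif_neg h1]
  rcases Nat.eq_zero_or_pos m.val with hm | hm
  · rw [dif_pos hm, cons_steps]
    have h2 : (⟨(m.succ : Fin (n+2)).val - 1, by omega⟩ : Fin (n+1)) = 0 := by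
      apply Fin.ext; simp [hm]
    rw [h2, Fin.cons_zero]
  · rw [dif_neg (by omega), cons_steps]
    have h2 : (⟨(m.succ : Fin (n+2)).val - 1, by omega⟩ : Fin (n+1)) =
        Fin.succ ⟨m.val - 1, by omega⟩ := by
      apply Fin.ext; simp; omega
    rw [h2, Fin.cons_succ]

theorem visits_cons {T : Finset K} (k : K) (c : C) (d : D) (g : Hist K C D n) :
    (cons k c d g).visits T ↔ k ∈ T ∨ g.visits T := by
  constructor
  · rintro ⟨m, hm⟩
    induction m using Fin.cases with
    | zero => left; rwa [state_cons_zero] at hm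
    | succ r => right; exact ⟨r, by rwa [state_cons_succ] at hm⟩
  · rintro (hk | ⟨m, hm⟩)
    · exact ⟨0, by rwa [state_cons_zero]⟩
    · exact ⟨m.succ, by rwa [state_cons_succ]⟩

theorem visits_snoc_of_visits {T : Finset K} {g : Hist K C D n} (x : C × D × K)
    (h : g.visits T) : (g.snoc x).visits T := by
  obtain ⟨m, hm⟩ := h
  exact ⟨m.castSucc, by rwa [state_snoc_castSucc]⟩

/-- Histories of length `n+1` as histories of length `n` plus a final step. -/
def snocEquiv (K C D : Type*) (n : ℕ) : Hist K C D (n + 1) ≃ Hist K C D n × (C × D × K) where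
  toFun h := (h.init, h.steps (Fin.last n))
  invFun p := p.1.snoc p.2
  left_inv h := snoc_init_self h
  right_inv p := by
    obtain ⟨g, x⟩ := p
    simp

/-- Histories of length `0` are just states. -/
def zeroEquiv (K C D : Type*) : Hist K C D 0 ≃ K where
  toFun h := h.first
  invFun k := ⟨k, Fin.elim0⟩
  left_inv h := ext' rfl (funext fun m => m.elim0)
  right_inv k := rfl

/-- Histories of length `n+1` as a first step plus a history of length `n`. -/
def consEquiv (K C D : Type*) (n : ℕ) :
    Hist K C D (n + 1) ≃ (K × C × D) × Hist K C D n where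
  toFun h := ((h.first, (h.steps 0).1, (h.steps 0).2.1),
    ⟨(h.steps 0).2.2, fun m => h.steps m.succ⟩)
  invFun p := cons p.1.1 p.1.2.1 p.1.2.2 p.2
  left_inv h := by
    refine ext' rfl ?_
    show Fin.cons (α := fun _ => C × D × K)
      ((h.steps 0).1, (h.steps 0).2.1, (h.steps 0).2.2) (fun m => h.steps m.succ) = h.steps
    exact Fin.cons_self_tail h.steps
  right_inv p := by
    obtain ⟨⟨k, c, d⟩, g⟩ := p
    refine Prod.ext ?_ (ext' ?_ ?_)
    · simp [Fin.cons_zero]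
    · simp [Fin.cons_zero]
    · funext m
      simp [Fin.cons_succ]

end Hist
/-! ### Probability lemmas -/

section Prob

open Hist

variable {K I J C D : Type*} [Fintype K] [Fintype I] [Fintype J] [Fintype C] [Fintype D]

/-- Shift a player-1 strategy by a signal prefix. -/
def shift1 (σ : Strategy1 I C) (cs : List C) : Strategy1 I C := fun xs => σ (cs ++ xs)

/-- Shift a player-2 strategy by a signal prefix. -/
def shift2 (τ : Strategy2 J D) (ds : List D) : Strategy2 J D := fun xs => τ (ds ++ xs)

theorem shift1_nil (σ : Strategy1 I C) : shift1 σ [] = σ := rfl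

theorem shift1_append (σ : Strategy1 I C) (cs : List C) (c : C) :
    shift1 σ (cs ++ [c]) = shift1 (shift1 σ cs) [c] := by
  funext xs; simp [shift1]

variable (G : Game K I J C D)

/-- One-step transition weight. -/
def stepP (σ : Strategy1 I C) (τ : Strategy2 J D) {n : ℕ} (g : Hist K C D n)
    (x : C × D × K) : ℝ :=
  ∑ i : I, ∑ j : J, (σ g.sig1).f i * (τ g.sig2).f j * G.p g.last i j x

theorem stepP_nonneg (σ : Strategy1 I C) (τ : Strategy2 J D) {n : ℕ} (g : Hist K C D n)
    (x : C × D × K) : 0 ≤ stepP G σ τ g x := by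
  refine Finset.sum_nonneg fun i _ => Finset.sum_nonneg fun j _ => ?_
  exact mul_nonneg (mul_nonneg ((σ g.sig1).nonneg i) ((τ g.sig2).nonneg j))
    (G.p_nonneg _ _ _ _)

theorem stepP_sum (σ : Strategy1 I C) (τ : Strategy2 J D) {n : ℕ} (g : Hist K C D n) :
    ∑ x : C × D × K, stepP G σ τ g x = 1 := by
  unfold stepP
  calc ∑ x : C × D × K, ∑ i, ∑ j, (σ g.sig1).f i * (τ g.sig2).f j * G.p g.last i j x
      = ∑ i, ∑ x : C × D × K, ∑ j, (σ g.sig1).f i * (τ g.sig2).f j * G.p g.last i j x :=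
        Finset.sum_comm
    _ = ∑ i, ∑ j, ∑ x : C × D × K, (σ g.sig1).f i * (τ g.sig2).f j * G.p g.last i j x :=
        Finset.sum_congr rfl fun i _ => Finset.sum_comm
    _ = ∑ i, ∑ j, (σ g.sig1).f i * (τ g.sig2).f j := by
        refine Finset.sum_congr rfl fun i _ => Finset.sum_congr rfl fun j _ => ?_
        rw [← Finset.mul_sum, G.p_sum, mul_one]
    _ = 1 := by
        rw [← Finset.sum_mul_sum, FDist.sum_one, FDist.sum_one, mul_one]

theorem playProb_zero (δ : FDist K) (σ : Strategy1 I C) (τ : Strategy2 J D)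
    (h : Hist K C D 0) : G.playProb δ σ τ 0 h = δ.f h.first := rfl

theorem playProb_succ (δ : FDist K) (σ : Strategy1 I C) (τ : Strategy2 J D) {n : ℕ}
    (h : Hist K C D (n + 1)) :
    G.playProb δ σ τ (n + 1) h =
      G.playProb δ σ τ n h.init * stepP G σ τ h.init (h.steps (Fin.last n)) := rfl

theorem playProb_snoc (δ : FDist K) (σ : Strategy1 I C) (τ : Strategy2 J D) {n : ℕ}
    (g : Hist K C D n) (x : C × D × K) :
    G.playProb δ σ τ (n + 1) (g.snoc x) =
      G.playProb δ σ τ n g * stepP G σ τ g x := by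
  rw [playProb_succ, init_snoc, snoc_steps_last]

theorem playProb_nonneg (δ : FDist K) (σ : Strategy1 I C) (τ : Strategy2 J D) :
    ∀ (n : ℕ) (h : Hist K C D n), 0 ≤ G.playProb δ σ τ n h := by
  intro n
  induction n with
  | zero => intro h; exact δ.nonneg h.first
  | succ n ih =>
      intro h
      rw [playProb_succ]
      exact mul_nonneg (ih h.init) (stepP_nonneg G σ τ _ _)

theorem playProb_eq_dirac (δ : FDist K) (σ : Strategy1 I C) (τ : Strategy2 J D) :
    ∀ (n : ℕ) (h : Hist K C D n),
      G.playProb δ σ τ n h = δ.f h.first * G.playProb (dirac h.first) σ τ n h := by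
  intro n
  induction n with
  | zero =>
      intro h
      rw [playProb_zero, playProb_zero]
      simp [dirac]
  | succ n ih =>
      intro h
      rw [playProb_succ, playProb_succ, ih h.init, init_first]
      ring

theorem sum_playProb (δ : FDist K) (σ : Strategy1 I C) (τ : Strategy2 J D) :
    ∀ n : ℕ, ∑ h : Hist K C D n, G.playProb δ σ τ n h = 1 := by
  intro n
  induction n with
  | zero =>
      calc ∑ h : Hist K C D 0, G.playProb δ σ τ 0 h
          = ∑ h : Hist K C D 0, δ.f ((zeroEquiv K C D) h) := rfl
        _ = ∑ k, δ.f k := Equiv.sum_comp (zeroEquiv K C D) δ.f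
        _ = 1 := δ.sum_one
  | succ n ih =>
      rw [← Equiv.sum_comp (snocEquiv K C D n).symm (G.playProb δ σ τ (n + 1)),
        Fintype.sum_prod_type]
      have hrw : ∀ (g : Hist K C D n) (x : C × D × K),
          G.playProb δ σ τ (n + 1) ((snocEquiv K C D n).symm (g, x)) =
            G.playProb δ σ τ n g * stepP G σ τ g x := fun g x => playProb_snoc G δ σ τ g x
      calc ∑ g : Hist K C D n, ∑ x : C × D × K,
            G.playProb δ σ τ (n + 1) ((snocEquiv K C D n).symm (g, x))
          = ∑ g : Hist K C D n, ∑ x : C × D × K,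
              G.playProb δ σ τ n g * stepP G σ τ g x := by
            exact Finset.sum_congr rfl fun g _ => Finset.sum_congr rfl fun x _ => hrw g x
        _ = ∑ g : Hist K C D n, G.playProb δ σ τ n g := by
            refine Finset.sum_congr rfl fun g _ => ?_
            rw [← Finset.mul_sum, stepP_sum, mul_one]
        _ = 1 := ih

/-- The probability of never visiting the target set within `n` steps. -/
def NR (δ : FDist K) (σ : Strategy1 I C) (τ : Strategy2 J D) (n : ℕ) : ℝ :=
  ∑ h : Hist K C D n, if h.visits G.T then 0 else G.playProb δ σ τ n h

theorem NR_nonneg (δ : FDist K) (σ : Strategy1 I C) (τ : Strategy2 J D) (n : ℕ) :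
    0 ≤ NR G δ σ τ n := by
  refine Finset.sum_nonneg fun h _ => ?_
  split_ifs
  · exact le_refl 0
  · exact playProb_nonneg G δ σ τ n h

theorem reach_add_NR (δ : FDist K) (σ : Strategy1 I C) (τ : Strategy2 J D) (n : ℕ) :
    G.reachProb δ σ τ n + NR G δ σ τ n = 1 := by
  rw [Game.reachProb, NR, ← Finset.sum_add_distrib]
  rw [show ∑ h : Hist K C D n,
      ((if h.visits G.T then G.playProb δ σ τ n h else 0) +
        if h.visits G.T then 0 else G.playProb δ σ τ n h) =
      ∑ h : Hist K C D n, G.playProb δ σ τ n h from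
    Finset.sum_congr rfl fun h _ => by split_ifs <;> ring]
  exact sum_playProb G δ σ τ n

theorem reach_le_one (δ : FDist K) (σ : Strategy1 I C) (τ : Strategy2 J D) (n : ℕ) :
    G.reachProb δ σ τ n ≤ 1 := by
  have h1 := reach_add_NR G δ σ τ n
  have h2 := NR_nonneg G δ σ τ n
  linarith

theorem NR_succ_le (δ : FDist K) (σ : Strategy1 I C) (τ : Strategy2 J D) (n : ℕ) :
    NR G δ σ τ (n + 1) ≤ NR G δ σ τ n := by
  rw [NR, NR, ← Equiv.sum_comp (snocEquiv K C D n).symm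
    (fun h => if h.visits G.T then 0 else G.playProb δ σ τ (n + 1) h),
    Fintype.sum_prod_type]
  refine Finset.sum_le_sum fun g _ => ?_
  have key : ∀ x : C × D × K,
      (if ((snocEquiv K C D n).symm (g, x)).visits G.T then (0 : ℝ)
        else G.playProb δ σ τ (n + 1) ((snocEquiv K C D n).symm (g, x))) ≤
      (if g.visits G.T then (0 : ℝ) else G.playProb δ σ τ n g * stepP G σ τ g x) := by
    intro x
    simp only [show ((snocEquiv K C D n).symm (g, x)) = g.snoc x from rfl]
    by_cases hg : g.visits G.T
    · rw [if_pos hg, if_pos (visits_snoc_of_visits x hg)]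
    · rw [if_neg hg]
      split_ifs with hs
      · exact mul_nonneg (playProb_nonneg G δ σ τ n g) (stepP_nonneg G σ τ g x)
      · exact le_of_eq (playProb_snoc G δ σ τ g x)
  calc ∑ x : C × D × K, (if ((snocEquiv K C D n).symm (g, x)).visits G.T then (0 : ℝ)
          else G.playProb δ σ τ (n + 1) ((snocEquiv K C D n).symm (g, x)))
      ≤ ∑ x : C × D × K,
          (if g.visits G.T then (0 : ℝ) else G.playProb δ σ τ n g * stepP G σ τ g x) :=
        Finset.sum_le_sum fun x _ => key x
    _ = if g.visits G.T then 0 else G.playProb δ σ τ n g := by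
        split_ifs with hg
        · simp
        · rw [← Finset.mul_sum, stepP_sum, mul_one]

theorem val_le_one (δ : FDist K) (σ : Strategy1 I C) (τ : Strategy2 J D) :
    G.val δ σ τ ≤ 1 :=
  ciSup_le fun n => reach_le_one G δ σ τ n

theorem bddAbove_reach (δ : FDist K) (σ : Strategy1 I C) (τ : Strategy2 J D) :
    BddAbove (Set.range fun n => G.reachProb δ σ τ n) := by
  refine ⟨1, ?_⟩
  rintro _ ⟨n, rfl⟩
  exact reach_le_one G δ σ τ n

theorem exists_NR_lt (δ : FDist K) (σ : Strategy1 I C) (τ : Strategy2 J D)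
    (hval : G.val δ σ τ = 1) {η : ℝ} (hη : 0 < η) : ∃ n, NR G δ σ τ n < η := by
  by_contra hcon
  push_neg at hcon
  have hub : G.val δ σ τ ≤ 1 - η := by
    refine ciSup_le fun n => ?_
    have h1 := reach_add_NR G δ σ τ n
    have h2 := hcon n
    linarith
  rw [hval] at hub
  linarith

theorem val_eq_one (δ : FDist K) (σ : Strategy1 I C) (τ : Strategy2 J D)
    (hb : ∀ η : ℝ, 0 < η → ∃ n, NR G δ σ τ n < η) : G.val δ σ τ = 1 := by
  refine le_antisymm (val_le_one G δ σ τ) ?_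
  by_contra hlt
  push_neg at hlt
  obtain ⟨n, hn⟩ := hb (1 - G.val δ σ τ) (by linarith)
  have h1 : G.reachProb δ σ τ n ≤ G.val δ σ τ :=
    le_ciSup (bddAbove_reach G δ σ τ) n
  have h2 := reach_add_NR G δ σ τ n
  linarith

theorem val_support_mono (δ δ' : FDist K) (hsub : δ'.support ⊆ δ.support)
    (σ : Strategy1 I C) (τ : Strategy2 J D) (h : G.val δ σ τ = 1) :
    G.val δ' σ τ = 1 := by
  set S : ℝ := ∑ k, if 0 < δ.f k then δ'.f k / δ.f k else 0 with hS
  have hS0 : 0 ≤ S := by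
    refine Finset.sum_nonneg fun k _ => ?_
    split_ifs with hk
    · exact div_nonneg (δ'.nonneg k) hk.le
    · exact le_refl 0
  set c : ℝ := 1 + S with hc
  have hc0 : 0 < c := by linarith
  have hle : ∀ k, δ'.f k ≤ c * δ.f k := by
    intro k
    by_cases h0 : 0 < δ'.f k
    · have hk : k ∈ δ'.support := by
        simp [FDist.support, h0]
      have hk2 : 0 < δ.f k := by
        have := hsub hk
        simpa [FDist.support] using this
      have hterm : δ'.f k / δ.f k ≤ S := by
        have h4 : (if 0 < δ.f k then δ'.f k / δ.f k else 0) ≤ S := by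
          rw [hS]
          exact Finset.single_le_sum
            (f := fun k => if 0 < δ.f k then δ'.f k / δ.f k else 0)
            (fun i _ => by
              show (0:ℝ) ≤ if 0 < δ.f i then δ'.f i / δ.f i else 0
              split_ifs with hk3
              · exact div_nonneg (δ'.nonneg i) hk3.le
              · exact le_refl 0)
            (Finset.mem_univ k)
        rwa [if_pos hk2] at h4
      calc δ'.f k = (δ'.f k / δ.f k) * δ.f k := by field_simp
        _ ≤ c * δ.f k := by
            apply mul_le_mul_of_nonneg_right _ hk2.le
            linarith
    · push_neg at h0
      have hz : δ'.f k = 0 := le_antisymm h0 (δ'.nonneg k)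
      rw [hz]
      exact mul_nonneg hc0.le (δ.nonneg k)
  have hNR : ∀ n, NR G δ' σ τ n ≤ c * NR G δ σ τ n := by
    intro n
    rw [NR, NR, Finset.mul_sum]
    refine Finset.sum_le_sum fun g _ => ?_
    split_ifs with hg
    · simp
    · rw [playProb_eq_dirac G δ' σ τ n g, playProb_eq_dirac G δ σ τ n g]
      have hP := playProb_nonneg G (dirac g.first) σ τ n g
      calc δ'.f g.first * G.playProb (dirac g.first) σ τ n g
          ≤ (c * δ.f g.first) * G.playProb (dirac g.first) σ τ n g :=
            mul_le_mul_of_nonneg_right (hle g.first) hP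
        _ = c * (δ.f g.first * G.playProb (dirac g.first) σ τ n g) := by ring
  refine val_eq_one G δ' σ τ fun η hη => ?_
  obtain ⟨n, hn⟩ := exists_NR_lt G δ σ τ h (show (0:ℝ) < η / c by positivity)
  refine ⟨n, lt_of_le_of_lt (hNR n) ?_⟩
  calc c * NR G δ σ τ n < c * (η / c) := by
        exact mul_lt_mul_of_pos_left hn hc0
    _ = η := by field_simp

theorem pSum_collapse (a : I → ℝ) (b : J → ℝ) (k : K) (c : C) (d : D) (l : K) :
    ∑ i, ∑ j, a i * b j * G.p k i j (c, d, l) =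
      a (G.act₁ c) * b (G.act₂ d) * G.p k (G.act₁ c) (G.act₂ d) (c, d, l) := by
  have hz : ∀ i j, i ≠ G.act₁ c ∨ j ≠ G.act₂ d → G.p k i j (c, d, l) = 0 := by
    intro i j hij
    by_contra hp
    have hpos : 0 < G.p k i j (c, d, l) :=
      lt_of_le_of_ne (G.p_nonneg k i j _) (Ne.symm hp)
    obtain ⟨h1, h2⟩ := G.act_compat k i j c d l hpos
    rcases hij with h | h
    · exact h h1
    · exact h h2
  rw [Finset.sum_eq_single (G.act₁ c)]
  · rw [Finset.sum_eq_single (G.act₂ d)]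
    · intro j _ hj
      rw [hz _ _ (Or.inr hj), mul_zero]
    · intro hmem
      exact absurd (Finset.mem_univ _) hmem
  · intro i _ hi
    have : ∀ j, G.p k i j (c, d, l) = 0 := fun j => hz i j (Or.inl hi)
    simp [this]
  · intro hmem
    exact absurd (Finset.mem_univ _) hmem

end Prob
/-! ### More lemmas: cons decomposition, supports, beliefs -/

section Prob2

open Hist

variable {K I J C D : Type*} [Fintype K] [Fintype I] [Fintype J] [Fintype C] [Fintype D]

theorem pos_factors {a b c : ℝ} (ha : 0 ≤ a) (hb : 0 ≤ b) (hc : 0 ≤ c)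
    (h : 0 < a * b * c) : 0 < a ∧ 0 < b ∧ 0 < c := by
  refine ⟨?_, ?_, ?_⟩ <;> by_contra h0 <;> push_neg at h0
  · nlinarith [mul_nonneg hb hc]
  · nlinarith [mul_nonneg ha hc]
  · nlinarith [mul_nonneg ha hb]

theorem pos_factors2 {a b : ℝ} (ha : 0 ≤ a) (hb : 0 ≤ b) (h : 0 < a * b) :
    0 < a ∧ 0 < b := by
  constructor <;> by_contra h0 <;> push_neg at h0 <;> nlinarith

theorem exists_pos_of_sum_pos {α : Type*} [Fintype α] {f : α → ℝ} (h : 0 < ∑ a, f a) :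
    ∃ a, 0 < f a := by
  by_contra hcon
  push_neg at hcon
  have : ∑ a, f a ≤ 0 := Finset.sum_nonpos fun a _ => hcon a
  linarith

theorem mem_support_iff (δ : FDist K) (k : K) : k ∈ δ.support ↔ 0 < δ.f k := by
  simp [FDist.support]

theorem support_nonempty (δ : FDist K) : δ.support.Nonempty := by
  by_contra hcon
  have hz : ∀ k, δ.f k = 0 := by
    intro k
    by_contra h0
    exact hcon ⟨k, (mem_support_iff δ k).mpr (lt_of_le_of_ne (δ.nonneg k) (Ne.symm h0))⟩
  have h1 := δ.sum_one
  rw [Finset.sum_congr rfl fun k _ => hz k] at h1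
  simp at h1

theorem uniform_f_pos (L : Finset K) (hL : L.Nonempty) {k : K} (hk : k ∈ L) :
    0 < (uniform L hL).f k := by
  show (0:ℝ) < if k ∈ L then ((L.card : ℝ))⁻¹ else 0
  rw [if_pos hk]
  have : (0:ℝ) < L.card := by exact_mod_cast Finset.card_pos.mpr hL
  positivity

theorem uniform_f_nonneg (L : Finset K) (hL : L.Nonempty) (k : K) :
    0 ≤ (uniform L hL).f k := (uniform L hL).nonneg k

theorem support_uniform (L : Finset K) (hL : L.Nonempty) : (uniform L hL).support = L := by
  ext k
  rw [mem_support_iff]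
  constructor
  · intro h
    by_contra hk
    have : (uniform L hL).f k = 0 := if_neg hk
    rw [this] at h
    exact lt_irrefl 0 h
  · intro hk
    exact uniform_f_pos L hL hk

variable (G : Game K I J C D)

theorem B1pseq_nil (L : Finset K) : G.B1pseq L [] = L := rfl

theorem B1pseq_append (L : Finset K) (cs : List C) (c : C) :
    G.B1pseq L (cs ++ [c]) = G.B1p (G.B1pseq L cs) c := by
  unfold Game.B1pseq
  rw [List.foldl_append]
  rfl

theorem mem_B1p (L : Finset K) (c : C) (l : K) :
    l ∈ G.B1p L c ↔ ∃ k ∈ L \ G.T, ∃ d, 0 < G.p k (G.act₁ c) (G.act₂ d) (c, d, l) := by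
  unfold Game.B1p Game.B1
  simp

theorem playProb_cons (δ : FDist K) (σ : Strategy1 I C) (τ : Strategy2 J D) :
    ∀ (n : ℕ) (g : Hist K C D n) (k : K) (c : C) (d : D),
      G.playProb δ σ τ (n + 1) (Hist.cons k c d g) =
        δ.f k * (∑ i, ∑ j, (σ []).f i * (τ []).f j * G.p k i j (c, d, g.first)) *
          G.playProb (dirac g.first) (shift1 σ [c]) (shift2 τ [d]) n g := by
  intro n
  induction n with
  | zero =>
      intro g k c d
      have h0 : (Fin.last 0 : Fin 1) = 0 := rfl
      have h3 : (Hist.cons k c d g).steps (Fin.last 0) = (c, d, g.first) := by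
        rw [cons_steps, h0]
        exact Fin.cons_zero _ _
      rw [playProb_succ]
      unfold stepP
      rw [h3, sig1_zero, sig2_zero]
      have h4 : (Hist.cons k c d g).init.last = k := rfl
      have h5 : G.playProb δ σ τ 0 (Hist.cons k c d g).init = δ.f k := rfl
      rw [h4, h5]
      have h6 : G.playProb (dirac g.first) (shift1 σ [c]) (shift2 τ [d]) 0 g =
          (dirac g.first).f g.first := rfl
      rw [h6]
      simp [dirac]
  | succ n ih =>
      intro g k c d
      rw [playProb_succ, init_cons, cons_steps_last, ih g.init k c d,
        playProb_succ G (dirac g.first)]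
      have hs : stepP G σ τ (Hist.cons k c d g.init) (g.steps (Fin.last n)) =
          stepP G (shift1 σ [c]) (shift2 τ [d]) g.init (g.steps (Fin.last n)) := by
        unfold stepP
        rw [sig1_cons, sig2_cons, last_cons]
        rfl
      rw [hs]
      simp only [init_first]
      ring

end Prob2

/-! ### The one-step lemma -/

section LemA

set_option maxHeartbeats 1000000

open Hist

variable {K I J C D : Type*} [Fintype K] [Fintype I] [Fintype J] [Fintype C] [Fintype D]
  [Nonempty J]

/-- Player 2: play uniformly at the first step, then according to `τ'`. -/
def switchStrat (τ' : Strategy2 J D) : Strategy2 J D := fun ds =>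
  match ds with
  | [] => uniform Finset.univ Finset.univ_nonempty
  | _ :: ds' => τ' ds'

theorem shift2_switch (τ' : Strategy2 J D) (d : D) : shift2 (switchStrat τ') [d] = τ' := rfl

variable (G : Game K I J C D)

/-- Summand of the one-step weight. -/
def termW (δ : FDist K) (σ : Strategy1 I C) (c : C) (l k : K) (d : D) : ℝ :=
  (if k ∈ G.T then 0 else δ.f k) *
    ((σ []).f (G.act₁ c) *
      ((uniform (Finset.univ : Finset J) Finset.univ_nonempty).f (G.act₂ d) *
        G.p k (G.act₁ c) (G.act₂ d) (c, d, l)))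

/-- One-step subprobability weight on the next state, given signal `c`. -/
def wgt (δ : FDist K) (σ : Strategy1 I C) (c : C) (l : K) : ℝ :=
  ∑ k, ∑ d, termW G δ σ c l k d

theorem termW_nonneg (δ : FDist K) (σ : Strategy1 I C) (c : C) (l k : K) (d : D) :
    0 ≤ termW G δ σ c l k d := by
  unfold termW
  have h1 : (0:ℝ) ≤ if k ∈ G.T then 0 else δ.f k := by
    split_ifs
    · exact le_refl 0
    · exact δ.nonneg k
  exact mul_nonneg h1 (mul_nonneg ((σ []).nonneg _)
    (mul_nonneg (uniform_f_nonneg _ _ _) (G.p_nonneg _ _ _ _)))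

theorem wgt_nonneg (δ : FDist K) (σ : Strategy1 I C) (c : C) (l : K) :
    0 ≤ wgt G δ σ c l :=
  Finset.sum_nonneg fun k _ => Finset.sum_nonneg fun d _ => termW_nonneg G δ σ c l k d

theorem wgt_pos (δ : FDist K) (σ : Strategy1 I C) (c : C)
    (hc : 0 < (σ []).f (G.act₁ c)) {l : K} (hl : l ∈ G.B1p δ.support c) :
    0 < wgt G δ σ c l := by
  rw [mem_B1p] at hl
  obtain ⟨k, hk, d, hp⟩ := hl
  obtain ⟨hk1, hk2⟩ := Finset.mem_sdiff.mp hk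
  have hkp : 0 < δ.f k := (mem_support_iff δ k).mp hk1
  have hpos : 0 < termW G δ σ c l k d := by
    unfold termW
    rw [if_neg hk2]
    have hu := uniform_f_pos (Finset.univ : Finset J) Finset.univ_nonempty
      (Finset.mem_univ (G.act₂ d))
    exact mul_pos hkp (mul_pos hc (mul_pos hu hp))
  have h1 : termW G δ σ c l k d ≤ ∑ d', termW G δ σ c l k d' :=
    Finset.single_le_sum (fun d' _ => termW_nonneg G δ σ c l k d') (Finset.mem_univ d)
  have h2 : (∑ d', termW G δ σ c l k d') ≤ wgt G δ σ c l := by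
    unfold wgt
    exact Finset.single_le_sum (f := fun k' => ∑ d', termW G δ σ c l k' d')
      (fun k' _ => Finset.sum_nonneg fun d' _ => termW_nonneg G δ σ c l k' d')
      (Finset.mem_univ k)
  linarith

/-- Histories of length `n+1`, exposing the first player-1 signal. -/
def consEquiv' (K C D : Type*) (n : ℕ) :
    Hist K C D (n + 1) ≃ C × (K × D × Hist K C D n) where
  toFun h := ((h.steps 0).1, (h.first, (h.steps 0).2.1,
    ⟨(h.steps 0).2.2, fun m => h.steps m.succ⟩))
  invFun p := Hist.cons p.2.1 p.1 p.2.2.1 p.2.2.2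
  left_inv h := by
    refine Hist.ext' rfl ?_
    rw [cons_steps]
    show Fin.cons (α := fun _ => C × D × K)
      ((h.steps 0).1, (h.steps 0).2.1, (h.steps 0).2.2) (fun m => h.steps m.succ) = h.steps
    exact Fin.cons_self_tail h.steps
  right_inv p := by
    obtain ⟨c, k, d, g⟩ := p
    refine Prod.ext ?_ (Prod.ext ?_ (Prod.ext ?_ (Hist.ext' ?_ ?_)))
    · simp [Fin.cons_zero]
    · rfl
    · simp [Fin.cons_zero]
    · simp [Fin.cons_zero]
    · funext m
      simp [Fin.cons_succ]

theorem lemA (δ : FDist K) (σ : Strategy1 I C) (hσ : ∀ τ, G.val δ σ τ = 1) (c : C)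
    (hc : 0 < (σ []).f (G.act₁ c)) (hne : (G.B1p δ.support c).Nonempty) (τ' : Strategy2 J D) :
    G.val (uniform (G.B1p δ.support c) hne) (shift1 σ [c]) τ' = 1 := by
  -- Step 1: M n ≤ NR δ σ τ* (n+1)
  have hM1 : ∀ n : ℕ, (∑ g : Hist K C D n, wgt G δ σ c g.first * (if g.visits G.T then 0 else G.playProb (dirac g.first) (shift1 σ [c]) τ' n g)) ≤ NR G δ σ (switchStrat τ') (n + 1) := by
    intro n
    have point : ∀ (k : K) (d : D) (g : Hist K C D n),
        (if (Hist.cons k c d g).visits G.T then (0:ℝ)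
          else G.playProb δ σ (switchStrat τ') (n + 1) (Hist.cons k c d g)) =
        termW G δ σ c g.first k d *
          (if g.visits G.T then 0 else G.playProb (dirac g.first) (shift1 σ [c]) τ' n g) := by
      intro k d g
      have hv := visits_cons (T := G.T) k c d g
      have hsw : ((switchStrat τ') ([] : List D)).f (G.act₂ d) =
          (uniform (Finset.univ : Finset J) Finset.univ_nonempty).f (G.act₂ d) := rfl
      have hplay : G.playProb δ σ (switchStrat τ') (n + 1) (Hist.cons k c d g) =
          δ.f k * ((σ []).f (G.act₁ c) *
            ((uniform (Finset.univ : Finset J) Finset.univ_nonempty).f (G.act₂ d) *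
              G.p k (G.act₁ c) (G.act₂ d) (c, d, g.first))) *
          G.playProb (dirac g.first) (shift1 σ [c]) τ' n g := by
        rw [playProb_cons, pSum_collapse, shift2_switch, hsw]
        ring
      by_cases hk : k ∈ G.T
      · rw [if_pos (hv.mpr (Or.inl hk))]
        unfold termW
        rw [if_pos hk]
        simp
      · by_cases hg : g.visits G.T
        · rw [if_pos (hv.mpr (Or.inr hg)), if_pos hg, mul_zero]
        · rw [if_neg (fun hvv => ((hv.mp hvv).elim hk hg)), if_neg hg, hplay]
          unfold termW
          rw [if_neg hk]
    -- expand NR over the cons equivalence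
    have expand : NR G δ σ (switchStrat τ') (n + 1) =
        ∑ c' : C, ∑ r : K × D × Hist K C D n,
          (if (Hist.cons r.1 c' r.2.1 r.2.2).visits G.T then (0:ℝ)
            else G.playProb δ σ (switchStrat τ') (n + 1) (Hist.cons r.1 c' r.2.1 r.2.2)) := by
      rw [NR, ← Equiv.sum_comp (consEquiv' K C D n).symm
        (fun h => if h.visits G.T then 0 else G.playProb δ σ (switchStrat τ') (n + 1) h),
        Fintype.sum_prod_type]
      rfl
    have hsingle : (∑ r : K × D × Hist K C D n,
        (if (Hist.cons r.1 c r.2.1 r.2.2).visits G.T then (0:ℝ)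
          else G.playProb δ σ (switchStrat τ') (n + 1) (Hist.cons r.1 c r.2.1 r.2.2)))
        ≤ NR G δ σ (switchStrat τ') (n + 1) := by
      rw [expand]
      refine Finset.single_le_sum (f := fun c' => ∑ r : K × D × Hist K C D n,
        (if (Hist.cons r.1 c' r.2.1 r.2.2).visits G.T then (0:ℝ)
          else G.playProb δ σ (switchStrat τ') (n + 1) (Hist.cons r.1 c' r.2.1 r.2.2)))
        (fun c' _ => Finset.sum_nonneg fun r _ => ?_) (Finset.mem_univ c)
      split_ifs
      · exact le_refl 0
      · exact playProb_nonneg G δ σ (switchStrat τ') (n + 1) _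
    refine le_trans (le_of_eq ?_) hsingle
    calc (∑ g : Hist K C D n, wgt G δ σ c g.first * (if g.visits G.T then 0 else G.playProb (dirac g.first) (shift1 σ [c]) τ' n g))
        = ∑ g : Hist K C D n, ∑ k : K, ∑ d : D, termW G δ σ c g.first k d *
            (if g.visits G.T then 0
              else G.playProb (dirac g.first) (shift1 σ [c]) τ' n g) := by
          refine Finset.sum_congr rfl fun g _ => ?_
          rw [wgt, Finset.sum_mul]
          exact Finset.sum_congr rfl fun k _ => by rw [Finset.sum_mul]
      _ = ∑ k : K, ∑ g : Hist K C D n, ∑ d : D, termW G δ σ c g.first k d *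
            (if g.visits G.T then 0
              else G.playProb (dirac g.first) (shift1 σ [c]) τ' n g) :=
          Finset.sum_comm
      _ = ∑ k : K, ∑ d : D, ∑ g : Hist K C D n, termW G δ σ c g.first k d *
            (if g.visits G.T then 0
              else G.playProb (dirac g.first) (shift1 σ [c]) τ' n g) :=
          Finset.sum_congr rfl fun k _ => Finset.sum_comm
      _ = ∑ k : K, ∑ d : D, ∑ g : Hist K C D n,
            (if (Hist.cons k c d g).visits G.T then (0:ℝ)
              else G.playProb δ σ (switchStrat τ') (n + 1) (Hist.cons k c d g)) := by
          refine Finset.sum_congr rfl fun k _ => Finset.sum_congr rfl fun d _ =>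
            Finset.sum_congr rfl fun g _ => (point k d g).symm
      _ = ∑ r : K × D × Hist K C D n,
            (if (Hist.cons r.1 c r.2.1 r.2.2).visits G.T then (0:ℝ)
              else G.playProb δ σ (switchStrat τ') (n + 1) (Hist.cons r.1 c r.2.1 r.2.2)) := by
          rw [Fintype.sum_prod_type]
          refine Finset.sum_congr rfl fun k _ => ?_
          exact (Fintype.sum_prod_type (fun z : D × Hist K C D n =>
            if (Hist.cons k c z.1 z.2).visits G.T then (0:ℝ)
            else G.playProb δ σ (switchStrat τ') (n + 1) (Hist.cons k c z.1 z.2))).symm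
  -- Step 2: the minimum weight on L'
  have hL'im : ((G.B1p δ.support c).image (wgt G δ σ c)).Nonempty := hne.image _
  set ε : ℝ := ((G.B1p δ.support c).image (wgt G δ σ c)).min' hL'im with hε
  have hεw : ∀ l ∈ G.B1p δ.support c, ε ≤ wgt G δ σ c l := fun l hl =>
    Finset.min'_le _ _ (Finset.mem_image_of_mem _ hl)
  have hε0 : 0 < ε := by
    obtain ⟨l₁, hl₁, hl₁'⟩ := Finset.mem_image.mp (Finset.min'_mem _ hL'im)
    rw [hε, ← hl₁']
    exact wgt_pos G δ σ c hc hl₁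
  have hcard : (0:ℝ) < ((G.B1p δ.support c).card : ℝ) := by
    exact_mod_cast Finset.card_pos.mpr hne
  -- Step 3: NR of the uniform distribution is controlled by M n
  have hM2 : ∀ n : ℕ, NR G (uniform (G.B1p δ.support c) hne) (shift1 σ [c]) τ' n ≤
      (((G.B1p δ.support c).card : ℝ))⁻¹ * ε⁻¹ * (∑ g : Hist K C D n, wgt G δ σ c g.first * (if g.visits G.T then 0 else G.playProb (dirac g.first) (shift1 σ [c]) τ' n g)) := by
    intro n
    rw [NR, Finset.mul_sum]
    refine Finset.sum_le_sum fun g _ => ?_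
    by_cases hg : g.visits G.T
    · rw [if_pos hg, if_pos hg, mul_zero, mul_zero]
    · rw [if_neg hg, if_neg hg,
        playProb_eq_dirac G (uniform (G.B1p δ.support c) hne) (shift1 σ [c]) τ' n g]
      have hP : 0 ≤ G.playProb (dirac g.first) (shift1 σ [c]) τ' n g :=
        playProb_nonneg G _ _ _ n g
      have hfb : (uniform (G.B1p δ.support c) hne).f g.first ≤
          (((G.B1p δ.support c).card : ℝ))⁻¹ * ε⁻¹ * wgt G δ σ c g.first := by
        have h1 : (uniform (G.B1p δ.support c) hne).f g.first =
            if g.first ∈ G.B1p δ.support c then (((G.B1p δ.support c).card : ℝ))⁻¹ else 0 := rfl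
        by_cases hgL : g.first ∈ G.B1p δ.support c
        · rw [h1, if_pos hgL]
          have h2 : ε ≤ wgt G δ σ c g.first := hεw _ hgL
          have h3 : 1 ≤ ε⁻¹ * wgt G δ σ c g.first := by
            rw [← div_eq_inv_mul]
            exact (one_le_div hε0).mpr h2
          calc (((G.B1p δ.support c).card : ℝ))⁻¹ = (((G.B1p δ.support c).card : ℝ))⁻¹ * 1 := (mul_one _).symm
            _ ≤ (((G.B1p δ.support c).card : ℝ))⁻¹ * (ε⁻¹ * wgt G δ σ c g.first) := by
                exact mul_le_mul_of_nonneg_left h3 (inv_nonneg.mpr hcard.le)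
            _ = (((G.B1p δ.support c).card : ℝ))⁻¹ * ε⁻¹ * wgt G δ σ c g.first := by ring
        · rw [h1, if_neg hgL]
          exact mul_nonneg (mul_nonneg (inv_nonneg.mpr hcard.le)
            (inv_nonneg.mpr hε0.le)) (wgt_nonneg G δ σ c g.first)
      calc (uniform (G.B1p δ.support c) hne).f g.first *
            G.playProb (dirac g.first) (shift1 σ [c]) τ' n g
          ≤ ((((G.B1p δ.support c).card : ℝ))⁻¹ * ε⁻¹ * wgt G δ σ c g.first) *
            G.playProb (dirac g.first) (shift1 σ [c]) τ' n g :=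
            mul_le_mul_of_nonneg_right hfb hP
        _ = (((G.B1p δ.support c).card : ℝ))⁻¹ * ε⁻¹ * (wgt G δ σ c g.first *
            G.playProb (dirac g.first) (shift1 σ [c]) τ' n g) := by ring
  -- Step 4: conclude
  refine val_eq_one G _ (shift1 σ [c]) τ' fun η hη => ?_
  have hCc : (0:ℝ) < (((G.B1p δ.support c).card : ℝ))⁻¹ * ε⁻¹ := by positivity
  obtain ⟨m, hm⟩ := exists_NR_lt G δ σ (switchStrat τ') (hσ (switchStrat τ'))
    (show (0:ℝ) < η / ((((G.B1p δ.support c).card : ℝ))⁻¹ * ε⁻¹) by positivity)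
  refine ⟨m, ?_⟩
  calc NR G (uniform (G.B1p δ.support c) hne) (shift1 σ [c]) τ' m
      ≤ (((G.B1p δ.support c).card : ℝ))⁻¹ * ε⁻¹ *
        (∑ g : Hist K C D m, wgt G δ σ c g.first *
          (if g.visits G.T then 0 else G.playProb (dirac g.first) (shift1 σ [c]) τ' m g)) :=
        hM2 m
    _ ≤ (((G.B1p δ.support c).card : ℝ))⁻¹ * ε⁻¹ * NR G δ σ (switchStrat τ') (m + 1) :=
        mul_le_mul_of_nonneg_left (hM1 m) hCc.le
    _ ≤ (((G.B1p δ.support c).card : ℝ))⁻¹ * ε⁻¹ * NR G δ σ (switchStrat τ') m :=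
        mul_le_mul_of_nonneg_left (NR_succ_le G δ σ (switchStrat τ') m) hCc.le
    _ < (((G.B1p δ.support c).card : ℝ))⁻¹ * ε⁻¹ * (η / ((((G.B1p δ.support c).card : ℝ))⁻¹ * ε⁻¹)) :=
        mul_lt_mul_of_pos_left hm hCc
    _ = η := by field_simp

end LemA
/-! ### The key induction -/

section KeyLemma

set_option maxHeartbeats 1000000

open Hist

variable {K I J C D : Type*} [Fintype K] [Fintype I] [Fintype J] [Fintype C] [Fintype D]
  [Nonempty K] [Nonempty J]

theorem uniform_congr {X : Type*} [Fintype X] {S S' : Finset X} (h : S = S')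
    (p : S.Nonempty) (p' : S'.Nonempty) : uniform S p = uniform S' p' := by
  subst h; rfl

theorem keyLemma (G : Game K I J C D) (δ : FDist K) (σ : Strategy1 I C)
    (hσ : ∀ τ, G.val δ σ τ = 1) (τ : Strategy2 J D) :
    ∀ (n : ℕ) (h : Hist K C D n), 0 < G.playProb δ σ τ n h →
      (∀ m : Fin (n + 1), m.val < n → h.state m ∉ G.T) →
      h.last ∈ G.B1pseq δ.support h.sig1 ∧
        ∀ τ'', G.val (uniformD (G.B1pseq δ.support h.sig1)) (shift1 σ h.sig1) τ'' = 1 := by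
  intro n
  induction n with
  | zero =>
      intro h hpos _
      rw [sig1_zero h]
      constructor
      · show h.first ∈ G.B1pseq δ.support []
        rw [B1pseq_nil]
        exact (mem_support_iff δ h.first).mpr hpos
      · intro τ''
        rw [B1pseq_nil, shift1_nil, uniformD, dif_pos (support_nonempty δ)]
        refine val_support_mono G δ _ ?_ σ τ'' (hσ τ'')
        rw [support_uniform]
  | succ n ih =>
      intro h hpos hnoT
      rw [playProb_succ] at hpos
      obtain ⟨hinitpos, hstep⟩ := pos_factors2 (playProb_nonneg G δ σ τ n h.init)
        (stepP_nonneg G σ τ h.init (h.steps (Fin.last n))) hpos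
      have hnoT' : ∀ m : Fin (n + 1), m.val < n → h.init.state m ∉ G.T := by
        intro m hm
        rw [state_init]
        exact hnoT m.castSucc (by simpa using Nat.lt_succ_of_lt hm)
      obtain ⟨hlast, hval⟩ := ih h.init hinitpos hnoT'
      -- extract a positive transition from the last step
      unfold stepP at hstep
      obtain ⟨i, hi⟩ := exists_pos_of_sum_pos hstep
      obtain ⟨j, hj⟩ := exists_pos_of_sum_pos hi
      obtain ⟨hσpos, hτpos, hppos⟩ := pos_factors ((σ h.init.sig1).nonneg i)
        ((τ h.init.sig2).nonneg j) (G.p_nonneg _ _ _ _) hj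
      have hcompat := G.act_compat h.init.last i j (h.steps (Fin.last n)).1
        (h.steps (Fin.last n)).2.1 (h.steps (Fin.last n)).2.2 hppos
      rw [hcompat.1, hcompat.2] at hppos
      -- the state before the last step is not a target state
      have hiT : h.init.last ∉ G.T := by
        rw [last_eq_state, state_init]
        exact hnoT (Fin.castSucc (Fin.last n)) (by simpa using Nat.lt_succ_self n)
      -- membership of the new state in the new pessimistic belief
      have hmem : (h.steps (Fin.last n)).2.2 ∈
          G.B1p (G.B1pseq δ.support h.init.sig1) (h.steps (Fin.last n)).1 := by
        rw [mem_B1p]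
        exact ⟨h.init.last, Finset.mem_sdiff.mpr ⟨hlast, hiT⟩,
          (h.steps (Fin.last n)).2.1, hppos⟩
      have hLn : (G.B1pseq δ.support h.init.sig1).Nonempty := ⟨_, hlast⟩
      have hval' : ∀ τ₂, G.val (uniform (G.B1pseq δ.support h.init.sig1) hLn)
          (shift1 σ h.init.sig1) τ₂ = 1 := by
        intro τ₂
        have := hval τ₂
        rwa [uniformD, dif_pos hLn] at this
      have hc1 : 0 < ((shift1 σ h.init.sig1) []).f (G.act₁ (h.steps (Fin.last n)).1) := by
        show 0 < (σ (h.init.sig1 ++ [])).f _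
        rw [List.append_nil, ← hcompat.1]
        exact hσpos
      have hsup : (uniform (G.B1pseq δ.support h.init.sig1) hLn).support =
          G.B1pseq δ.support h.init.sig1 := support_uniform _ _
      have hne' : (G.B1p (uniform (G.B1pseq δ.support h.init.sig1) hLn).support
          (h.steps (Fin.last n)).1).Nonempty := by
        rw [hsup]
        exact ⟨_, hmem⟩
      have hA := lemA G (uniform (G.B1pseq δ.support h.init.sig1) hLn)
        (shift1 σ h.init.sig1) hval' (h.steps (Fin.last n)).1 hc1 hne'
      have hSeq : G.B1p (uniform (G.B1pseq δ.support h.init.sig1) hLn).support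
          (h.steps (Fin.last n)).1 =
          G.B1p (G.B1pseq δ.support h.init.sig1) (h.steps (Fin.last n)).1 := by
        rw [hsup]
      have huc : uniform _ hne' = uniform (G.B1p (G.B1pseq δ.support h.init.sig1)
          (h.steps (Fin.last n)).1) ⟨_, hmem⟩ := uniform_congr hSeq hne' ⟨_, hmem⟩
      rw [huc] at hA
      have hsig : h.sig1 = h.init.sig1 ++ [(h.steps (Fin.last n)).1] := sig1_eq h
      have hlast2 : h.last = (h.steps (Fin.last n)).2.2 := rfl
      constructor
      · rw [hsig, B1pseq_append, hlast2]
        exact hmem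
      · intro τ''
        rw [hsig, B1pseq_append, shift1_append, uniformD,
          dif_pos (show (G.B1p (G.B1pseq δ.support h.init.sig1)
            (h.steps (Fin.last n)).1).Nonempty from ⟨_, hmem⟩)]
        exact hA τ''

end KeyLemma

/-- if `σ` is almost-surely winning for player 1 from `δ`, then along
any play of positive probability, either the pessimistic belief of player 1 remains
an almost-surely winning support for player 1, or a target state was visited. -/
theorem pessimistic_belief1_stays_winning (G : Game K I J C D) (δ : FDist K)
    (L : Finset K) (hδ : δ.support = L) (σ : Strategy1 I C)
    (hσ : ∀ τ, G.val δ σ τ = 1) :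
    ∀ (τ : Strategy2 J D) (n : ℕ), 1 ≤ n → ∀ h : Hist K C D n,
      0 < G.playProb δ σ τ n h →
      (G.AlmostSureWin1 (uniformD (G.B1pseq L h.sig1)) ∨
        ∃ m : Fin (n + 1), m.val < n ∧ h.state m ∈ G.T) := by
  intro τ n _ h hpos
  by_cases hT : ∃ m : Fin (n + 1), m.val < n ∧ h.state m ∈ G.T
  · exact Or.inr hT
  · left
    push_neg at hT
    obtain ⟨-, hval⟩ := keyLemma G δ σ hσ τ n h hpos hT
    rw [← hδ]
    exact ⟨shift1 σ h.sig1, hval⟩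
end
end

section
/- For every support L ⊆ K with L ∉ 𝓛_∞ (the greatest fixpoint of Φ), the uniformly random strategy σ_R of player 1 satisfies γ₁(δ,σ_R,τ) > 0 for every initial distribution δ with support L and every strategy τ of player 2; in particular L is positively winning for player 1. -/
open scoped Classical

noncomputable section

variable {K I J C D : Type*} [Fintype K] [Fintype I] [Fintype J] [Fintype C] [Fintype D]
  [Nonempty K] [Nonempty I] [Nonempty J] [Nonempty C] [Nonempty D]

section Aux

theorem Hist.ext'_s12 {K C D : Type*} {n : ℕ} {h g : Hist K C D n} (h1 : h.first = g.first)
    (h2 : h.steps = g.steps) : h = g := by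
  cases h; cases g; cases h1; cases h2; rfl

theorem sum_pos_iff' {α : Type*} [Fintype α] {f : α → ℝ} (h0 : ∀ a, 0 ≤ f a) :
    (0 < ∑ a, f a) ↔ ∃ a, 0 < f a := by
  constructor
  · intro h
    by_contra hc
    push_neg at hc
    rw [Finset.sum_eq_zero (fun a _ => le_antisymm (hc a) (h0 a))] at h
    exact lt_irrefl _ h
  · rintro ⟨a, ha⟩
    exact Finset.sum_pos' (fun a _ => h0 a) ⟨a, Finset.mem_univ a, ha⟩

theorem pos_pos_of_mul_pos {a b : ℝ} (h : 0 < a * b) (ha : 0 ≤ a) (hb : 0 ≤ b) :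
    0 < a ∧ 0 < b := by
  rcases mul_pos_iff.mp h with ⟨h1, h2⟩ | ⟨h1, h2⟩
  · exact ⟨h1, h2⟩
  · exact absurd h1 (not_lt.mpr ha)

namespace Game

variable {K I J C D : Type*} [Fintype K] [Fintype I] [Fintype J] [Fintype C] [Fintype D]

theorem playProb_nonneg (G : Game K I J C D) (δ : FDist K) (σ : Strategy1 I C)
    (τ : Strategy2 J D) : ∀ n (h : Hist K C D n), 0 ≤ G.playProb δ σ τ n h := by
  intro n
  induction n with
  | zero =>
    intro h
    exact δ.nonneg _
  | succ n ih =>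
    intro h
    refine mul_nonneg (ih _) (Finset.sum_nonneg fun i _ => Finset.sum_nonneg fun j _ => ?_)
    exact mul_nonneg (mul_nonneg ((σ _).nonneg _) ((τ _).nonneg _)) (G.p_nonneg _ _ _ _)

/-- append a step at the end -/
def histSnoc {n : ℕ} (h : Hist K C D n) (x : C × D × K) : Hist K C D (n + 1) :=
  ⟨h.first, Fin.snoc h.steps x⟩

theorem histSnoc_init {n : ℕ} (h : Hist K C D n) (x : C × D × K) :
    (histSnoc h x).init = h := by
  refine Hist.ext'_s12 rfl (funext fun m => ?_)
  exact Fin.snoc_castSucc (α := fun _ => C × D × K) x h.steps m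

theorem histSnoc_last_step {n : ℕ} (h : Hist K C D n) (x : C × D × K) :
    (histSnoc h x).steps (Fin.last n) = x := Fin.snoc_last (α := fun _ => C × D × K) x h.steps

def histEquiv (n : ℕ) : Hist K C D (n + 1) ≃ Hist K C D n × (C × D × K) where
  toFun h := (h.init, h.steps (Fin.last n))
  invFun p := histSnoc p.1 p.2
  left_inv h := by
    refine Hist.ext'_s12 rfl ?_
    exact Fin.snoc_init_self h.steps
  right_inv p := by
    exact Prod.ext (histSnoc_init p.1 p.2) (histSnoc_last_step p.1 p.2)

theorem sum_playProb (G : Game K I J C D) (δ : FDist K) (σ : Strategy1 I C)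
    (τ : Strategy2 J D) : ∀ n, ∑ h : Hist K C D n, G.playProb δ σ τ n h = 1 := by
  intro n
  induction n with
  | zero =>
    refine (Fintype.sum_bijective (fun h : Hist K C D 0 => h.first)
      ⟨fun a b hab => Hist.ext'_s12 hab (funext fun m => m.elim0),
       fun k => ⟨⟨k, fun m => m.elim0⟩, rfl⟩⟩
      (fun h => G.playProb δ σ τ 0 h) δ.f (fun h => rfl)).trans δ.sum_one
  | succ n ih =>
    rw [← Equiv.sum_comp (histEquiv (K:=K) (C:=C) (D:=D) n).symm (fun h => G.playProb δ σ τ (n+1) h)]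
    rw [Fintype.sum_prod_type]
    have key : ∀ (h : Hist K C D n) (x : C × D × K),
        G.playProb δ σ τ (n+1) ((histEquiv (K:=K) (C:=C) (D:=D) n).symm (h, x)) =
        G.playProb δ σ τ n h *
          ∑ i : I, ∑ j : J, (σ h.sig1).f i * (τ h.sig2).f j * G.p h.last i j x := by
      intro h x
      show G.playProb δ σ τ (n+1) (histSnoc h x) = _
      rw [Game.playProb, histSnoc_init, histSnoc_last_step]
    calc ∑ h : Hist K C D n, ∑ x : C × D × K,
            G.playProb δ σ τ (n+1) ((histEquiv (K:=K) (C:=C) (D:=D) n).symm (h, x))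
        = ∑ h : Hist K C D n, G.playProb δ σ τ n h := by
          refine Finset.sum_congr rfl fun h _ => ?_
          rw [Finset.sum_congr rfl (fun x _ => key h x), ← Finset.mul_sum]
          have : ∑ x : C × D × K, ∑ i : I, ∑ j : J,
              (σ h.sig1).f i * (τ h.sig2).f j * G.p h.last i j x = 1 := by
            rw [Finset.sum_comm]
            have : ∀ i : I, ∑ x : C × D × K, ∑ j : J,
                (σ h.sig1).f i * (τ h.sig2).f j * G.p h.last i j x
                = (σ h.sig1).f i := by
              intro i
              rw [Finset.sum_comm]
              have : ∀ j : J, ∑ x : C × D × K,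
                  (σ h.sig1).f i * (τ h.sig2).f j * G.p h.last i j x
                  = (σ h.sig1).f i * (τ h.sig2).f j := by
                intro j
                rw [← Finset.mul_sum, G.p_sum, mul_one]
              rw [Finset.sum_congr rfl (fun j _ => this j), ← Finset.mul_sum,
                (τ h.sig2).sum_one, mul_one]
            rw [Finset.sum_congr rfl (fun i _ => this i), (σ h.sig1).sum_one]
          rw [this, mul_one]
      _ = 1 := ih

theorem reachProb_le_one (G : Game K I J C D) (δ : FDist K) (σ : Strategy1 I C)
    (τ : Strategy2 J D) (n : ℕ) : G.reachProb δ σ τ n ≤ 1 := by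
  rw [Game.reachProb]
  calc (∑ h : Hist K C D n, if h.visits G.T then G.playProb δ σ τ n h else 0)
      ≤ ∑ h : Hist K C D n, G.playProb δ σ τ n h := by
        refine Finset.sum_le_sum fun h _ => ?_
        split
        · exact le_refl _
        · exact G.playProb_nonneg δ σ τ n h
    _ = 1 := G.sum_playProb δ σ τ n

theorem playProb_factor (G : Game K I J C D) (δ : FDist K) (σ : Strategy1 I C)
    (τ : Strategy2 J D) : ∀ n (h : Hist K C D n),
    G.playProb δ σ τ n h = δ.f h.first * G.playProb (dirac h.first) σ τ n h := by
  intro n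
  induction n with
  | zero =>
    intro h
    show δ.f h.first = δ.f h.first * (if h.first = h.first then (1:ℝ) else 0)
    rw [if_pos rfl, mul_one]
  | succ n ih =>
    intro h
    show G.playProb δ σ τ n h.init * _ = δ.f h.first * (G.playProb (dirac h.first) σ τ n h.init * _)
    rw [ih h.init]
    have : h.init.first = h.first := rfl
    rw [this]
    ring

end Game

end Aux

theorem FDist.mem_support' {X : Type*} [Fintype X] (δ : FDist X) (x : X) :
    x ∈ δ.support ↔ 0 < δ.f x := by
  simp [FDist.support]

namespace Game

variable {K I J C D : Type*} [Fintype K] [Fintype I] [Fintype J] [Fintype C] [Fintype D]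

/-- prepend a step at the front -/
def histCons {n : ℕ} (l : K) (x : C × D × K) (h : Hist K C D n) : Hist K C D (n + 1) :=
  ⟨l, fun m => if hm : m.val = 0 then x else h.steps ⟨m.val - 1, by have := m.isLt; omega⟩⟩

theorem histCons_init {n : ℕ} (l : K) (x : C × D × K) (h : Hist K C D (n + 1)) :
    (histCons l x h).init = histCons l x h.init := by
  refine Hist.ext'_s12 rfl (funext fun m => ?_)
  show (histCons l x h).steps m.castSucc = _
  by_cases hm : m.val = 0
  · have h1 : (m.castSucc).val = 0 := hm
    simp only [histCons, Hist.init, dif_pos hm, dif_pos h1]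
  · have h1 : ¬ (m.castSucc).val = 0 := hm
    simp only [histCons, Hist.init, dif_neg hm, dif_neg h1]
    exact congrArg h.steps (Fin.ext rfl)

theorem histCons_last {n : ℕ} (l : K) (x : C × D × K) (h : Hist K C D n)
    (hx : h.first = x.2.2) : (histCons l x h).last = h.last := by
  cases n with
  | zero =>
    show ((histCons l x h).steps (Fin.last 0)).2.2 = h.first
    simp only [histCons]
    rw [hx]
    rfl
  | succ n =>
    show ((histCons l x h).steps (Fin.last (n+1))).2.2 = (h.steps (Fin.last n)).2.2
    simp only [histCons]
    rw [dif_neg (by simp [Fin.last])]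
    rfl

theorem histCons_sig1 {n : ℕ} (l : K) (x : C × D × K) (h : Hist K C D n) :
    (histCons l x h).sig1 = x.1 :: h.sig1 := by
  show List.ofFn _ = x.1 :: List.ofFn _
  rw [List.ofFn_succ]
  rfl

theorem histCons_sig2 {n : ℕ} (l : K) (x : C × D × K) (h : Hist K C D n) :
    (histCons l x h).sig2 = x.2.1 :: h.sig2 := by
  show List.ofFn _ = x.2.1 :: List.ofFn _
  rw [List.ofFn_succ]
  rfl

theorem histCons_state {n : ℕ} (l : K) (x : C × D × K) (h : Hist K C D n)
    (hx : h.first = x.2.2) (m : Fin (n + 1)) :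
    (histCons l x h).state m.succ = h.state m := by
  have hms : (m.succ : Fin (n + 2)).val = m.val + 1 := rfl
  rw [Hist.state, dif_neg (by omega)]
  by_cases hm : m.val = 0
  · have : ((histCons l x h).steps ⟨m.succ.val - 1, by have := m.isLt; omega⟩) = x := by
      simp only [histCons]
      rw [dif_pos (by omega)]
    rw [this, Hist.state, dif_pos hm, hx]
  · have : ((histCons l x h).steps ⟨m.succ.val - 1, by have := m.isLt; omega⟩)
        = h.steps ⟨m.val - 1, by have := m.isLt; omega⟩ := by
      simp only [histCons]
      rw [dif_neg (by omega)]
      exact congrArg h.steps (Fin.ext (by simp [hms]))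
    rw [this, Hist.state, dif_neg hm]

theorem playProb_cons (G : Game K I J C D) (δ : FDist K) (σ : Strategy1 I C)
    (τ : Strategy2 J D) : ∀ (n : ℕ) (h : Hist K C D n) (l : K) (x : C × D × K),
    h.first = x.2.2 →
    G.playProb δ σ τ (n + 1) (histCons l x h) =
      δ.f l * (∑ i : I, ∑ j : J, (σ []).f i * (τ []).f j * G.p l i j x) *
        G.playProb (dirac x.2.2) (fun cs => σ (x.1 :: cs)) (fun ds => τ (x.2.1 :: ds)) n h := by
  intro n
  induction n with
  | zero =>
    intro h l x hx
    rw [Game.playProb.eq_2 G δ σ τ 0 (histCons l x h)]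
    have h1 : (histCons l x h).init = (⟨l, fun m => m.elim0⟩ : Hist K C D 0) :=
      Hist.ext'_s12 rfl (funext fun m => m.elim0)
    have h2 : (histCons l x h).steps (Fin.last 0) = x := rfl
    rw [h1, h2]
    have hsig1 : (⟨l, fun m => m.elim0⟩ : Hist K C D 0).sig1 = [] := by
      simp [Hist.sig1]
    have hsig2 : (⟨l, fun m => m.elim0⟩ : Hist K C D 0).sig2 = [] := by
      simp [Hist.sig2]
    have hlast : (⟨l, fun m => m.elim0⟩ : Hist K C D 0).last = l := rfl
    rw [hsig1, hsig2, hlast]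
    show δ.f l * _ = _ * ((dirac x.2.2).f h.first)
    have : (dirac x.2.2).f h.first = 1 := by
      show (if h.first = x.2.2 then (1:ℝ) else 0) = 1
      rw [if_pos hx]
    rw [this, mul_one]
  | succ n ih =>
    intro h l x hx
    have hx' : h.init.first = x.2.2 := hx
    rw [Game.playProb.eq_2 G δ σ τ (n+1) (histCons l x h), histCons_init, ih h.init l x hx',
      histCons_sig1, histCons_sig2, histCons_last l x h.init hx']
    have hlaststep : (histCons l x h).steps (Fin.last (n + 1)) = h.steps (Fin.last n) := by
      simp only [histCons]
      rw [dif_neg (by simp [Fin.last])]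
      exact congrArg h.steps (Fin.ext (by simp [Fin.last]))
    rw [hlaststep]
    show _ = δ.f l * _ * (G.playProb _ _ _ n h.init * _)
    ring

theorem iter_antitone (G : Game K I J C D) :
    Antitone (fun n => G.Phi^[n] Set.univ) := by
  refine antitone_nat_of_succ_le fun n => ?_
  show G.Phi^[n+1] Set.univ ≤ G.Phi^[n] Set.univ
  rw [Function.iterate_succ_apply]
  exact (G.Phi_mono.iterate n) (fun L _ => Set.mem_univ L)

theorem B2_empty (G : Game K I J C D) (d : D) : G.B2 ∅ d = ∅ := by
  simp [Game.B2]

theorem empty_mem_iter (G : Game K I J C D) [Nonempty J] :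
    ∀ n, (∅ : Finset K) ∈ G.Phi^[n] Set.univ := by
  intro n
  induction n with
  | zero => exact Set.mem_univ _
  | succ n ih =>
    rw [Function.iterate_succ_apply']
    exact ⟨ih, Finset.empty_inter _, Classical.arbitrary J,
      fun d _ => by rw [G.B2_empty]; exact ih⟩

theorem not_gfp_exists (G : Game K I J C D) (L : Finset K) (h : L ∉ G.Linf) :
    ∃ n, L ∉ G.Phi^[n] Set.univ := by
  by_contra hc
  push_neg at hc
  apply h
  have key : {M : Finset K | ∀ n, M ∈ G.Phi^[n] Set.univ} ≤
      G.Phi {M : Finset K | ∀ n, M ∈ G.Phi^[n] Set.univ} := by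
    intro M hM
    have hM' : ∀ n, M ∈ G.Phi^[n] Set.univ := hM
    have h1 : M ∈ G.Phi (G.Phi^[0] Set.univ) := by
      have := hM' 1
      rwa [Function.iterate_succ_apply'] at this
    refine ⟨hM, h1.2.1, ?_⟩
    by_contra hj
    push_neg at hj
    simp only [Set.mem_setOf_eq, not_forall] at hj
    choose d hd nn hnn using hj
    set N := Finset.univ.sup nn with hN
    have hMN := hM' (N + 1)
    rw [Function.iterate_succ_apply'] at hMN
    obtain ⟨_, _, j₀, hj₀⟩ := hMN
    have hmem := hj₀ (d j₀) (hd j₀)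
    exact hnn j₀ (G.iter_antitone (Finset.le_sup (Finset.mem_univ j₀)) hmem)
  have hle := OrderHom.le_gfp (⟨G.Phi, G.Phi_mono⟩ : Set (Finset K) →o Set (Finset K))
    (a := {M : Finset K | ∀ n, M ∈ G.Phi^[n] Set.univ}) key
  exact (Set.le_iff_subset.mp hle) hc

set_option maxHeartbeats 1000000 in
theorem main_reach (G : Game K I J C D) [Nonempty I] [Nonempty J] :
    ∀ (n : ℕ) (δ : FDist K) (τ : Strategy2 J D), δ.support ∉ G.Phi^[n] Set.univ →
      ∃ (m : ℕ) (h : Hist K C D m), h.visits G.T ∧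
        0 < G.playProb δ (randomStrat I C) τ m h := by
  intro n
  induction n with
  | zero => intro δ τ hmem; exact absurd (Set.mem_univ _) hmem
  | succ n ih =>
    intro δ τ hmem
    rw [Function.iterate_succ_apply'] at hmem
    rcases Classical.em (δ.support ∈ G.Phi^[n] Set.univ) with h1 | h1
    swap
    · exact ih δ τ h1
    by_cases h2 : δ.support ∩ G.T = ∅
    · -- the j-condition fails
      have h3 : ¬ ∃ j : J, ∀ d : D, G.act₂ d = j →
          G.B2 δ.support d ∈ G.Phi^[n] Set.univ := fun hcon => hmem ⟨h1, h2, hcon⟩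
      push_neg at h3
      obtain ⟨j₀, hj₀⟩ : ∃ j, 0 < (τ []).f j :=
        (sum_pos_iff' (τ []).nonneg).mp (by rw [(τ []).sum_one]; norm_num)
      obtain ⟨d, hd, hB⟩ := h3 j₀
      set w : K → ℝ := fun k =>
        ∑ l : K, ∑ c : C, δ.f l * G.p l (G.act₁ c) (G.act₂ d) (c, d, k) with hwdef
      have hw_nonneg : ∀ k, 0 ≤ w k := fun k =>
        Finset.sum_nonneg fun l _ => Finset.sum_nonneg fun c _ =>
          mul_nonneg (δ.nonneg l) (G.p_nonneg _ _ _ _)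
      have hw_pos_iff : ∀ k, 0 < w k ↔ k ∈ G.B2 δ.support d := by
        intro k
        rw [sum_pos_iff' (fun l => Finset.sum_nonneg fun c _ =>
          mul_nonneg (δ.nonneg l) (G.p_nonneg _ _ _ _))]
        simp only [Game.B2, Finset.mem_filter, Finset.mem_univ, true_and]
        constructor
        · rintro ⟨l, hl⟩
          obtain ⟨c, hc⟩ := (sum_pos_iff' (fun c =>
            mul_nonneg (δ.nonneg l) (G.p_nonneg _ _ _ _))).mp hl
          obtain ⟨hδl, hp⟩ := pos_pos_of_mul_pos hc (δ.nonneg l) (G.p_nonneg _ _ _ _)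
          exact ⟨l, (δ.mem_support' l).mpr hδl, c, hp⟩
        · rintro ⟨l, hl, c, hp⟩
          have hδl : 0 < δ.f l := (δ.mem_support' l).mp hl
          refine ⟨l, Finset.sum_pos' (fun c _ =>
            mul_nonneg (δ.nonneg l) (G.p_nonneg _ _ _ _))
            ⟨c, Finset.mem_univ c, mul_pos hδl hp⟩⟩
      have hZ : 0 < ∑ k : K, w k := by
        refine (sum_pos_iff' hw_nonneg).mpr ?_
        have hL'ne : G.B2 δ.support d ≠ ∅ := by
          intro h0; rw [h0] at hB; exact hB (G.empty_mem_iter n)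
        obtain ⟨k, hk⟩ := Finset.nonempty_iff_ne_empty.mpr hL'ne
        exact ⟨k, (hw_pos_iff k).mpr hk⟩
      set δ' : FDist K := ⟨fun k => w k / (∑ k : K, w k),
        fun k => div_nonneg (hw_nonneg k) hZ.le,
        by rw [← Finset.sum_div, div_self hZ.ne']⟩ with hδ'def
      have hdivpos : ∀ k, 0 < δ'.f k ↔ 0 < w k := by
        intro k
        constructor
        · intro h
          rcases div_pos_iff.mp h with ⟨ha, _⟩ | ⟨_, hb⟩
          · exact ha
          · exact absurd hZ (not_lt.mpr hb.le)
        · intro h; exact div_pos h hZ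
      have hsupp : δ'.support = G.B2 δ.support d := by
        ext k
        rw [FDist.mem_support', hdivpos k, hw_pos_iff k]
      obtain ⟨m, h', hvis, hpos⟩ := ih δ' (fun ds => τ (d :: ds)) (by rw [hsupp]; exact hB)
      rw [G.playProb_factor] at hpos
      obtain ⟨hδ'pos, hQ⟩ := pos_pos_of_mul_pos hpos (δ'.nonneg _)
        (G.playProb_nonneg _ _ _ _ _)
      have hwpos : 0 < w h'.first := (hdivpos h'.first).mp hδ'pos
      obtain ⟨l, hl⟩ := (sum_pos_iff' (fun l => Finset.sum_nonneg fun c _ =>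
        mul_nonneg (δ.nonneg l) (G.p_nonneg _ _ _ _))).mp hwpos
      obtain ⟨c, hc⟩ := (sum_pos_iff' (fun c =>
        mul_nonneg (δ.nonneg l) (G.p_nonneg _ _ _ _))).mp hl
      obtain ⟨hδl, hp⟩ := pos_pos_of_mul_pos hc (δ.nonneg l) (G.p_nonneg _ _ _ _)
      refine ⟨m + 1, histCons l (c, d, h'.first) h', ?_, ?_⟩
      · obtain ⟨mm, hmm⟩ := hvis
        exact ⟨mm.succ, by rw [histCons_state l (c, d, h'.first) h' rfl mm]; exact hmm⟩
      · rw [G.playProb_cons δ (randomStrat I C) τ m h' l (c, d, h'.first) rfl]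
        refine mul_pos (mul_pos hδl ?_) hQ
        refine Finset.sum_pos' (fun i _ => Finset.sum_nonneg fun j _ =>
          mul_nonneg (mul_nonneg ((randomStrat I C []).nonneg i) ((τ []).nonneg j))
            (G.p_nonneg _ _ _ _)) ⟨G.act₁ c, Finset.mem_univ _, ?_⟩
        refine Finset.sum_pos' (fun j _ =>
          mul_nonneg (mul_nonneg ((randomStrat I C []).nonneg _) ((τ []).nonneg j))
            (G.p_nonneg _ _ _ _)) ⟨G.act₂ d, Finset.mem_univ _, ?_⟩
        refine mul_pos (mul_pos ?_ ?_) hp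
        · show 0 < (uniform Finset.univ Finset.univ_nonempty).f (G.act₁ c)
          show 0 < if G.act₁ c ∈ (Finset.univ : Finset I) then ((Finset.univ : Finset I).card : ℝ)⁻¹ else 0
          rw [if_pos (Finset.mem_univ _)]
          have : 0 < (Finset.univ : Finset I).card := Finset.card_pos.mpr Finset.univ_nonempty
          positivity
        · rw [hd]; exact hj₀
    · obtain ⟨k, hk⟩ := Finset.nonempty_iff_ne_empty.mpr h2
      rw [Finset.mem_inter] at hk
      refine ⟨0, ⟨k, fun m => m.elim0⟩, ⟨0, ?_⟩, ?_⟩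
      · have : (⟨k, fun m => m.elim0⟩ : Hist K C D 0).state 0 = k := rfl
        rw [this]
        exact hk.2
      · show 0 < δ.f k
        exact (δ.mem_support' k).mp hk.1

end Game

theorem uniform_support {X : Type*} [Fintype X] (L : Finset X) (hL : L.Nonempty) :
    (uniform L hL).support = L := by
  ext x
  rw [FDist.mem_support']
  show (0 < if x ∈ L then (L.card : ℝ)⁻¹ else 0) ↔ x ∈ L
  constructor
  · intro h
    by_contra hx
    rw [if_neg hx] at h
    exact lt_irrefl _ h
  · intro hx
    rw [if_pos hx]
    have : 0 < L.card := Finset.card_pos.mpr hL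
    positivity

/-- from any support outside the greatest fixpoint `𝓛_∞` of `Φ`, the
uniformly random strategy of player 1 wins positively against every strategy of
player 2; in particular the support is positively winning for player 1. -/
theorem not_gfp_positively_winning1 (G : Game K I J C D) (L : Finset K)
    (hL : L.Nonempty) (hnot : L ∉ G.Linf) :
    (∀ δ : FDist K, δ.support = L →
      ∀ τ : Strategy2 J D, 0 < G.val δ (randomStrat I C) τ) ∧
    G.PositiveWin1 (uniform L hL) := by
  have main : ∀ δ : FDist K, δ.support = L →
      ∀ τ : Strategy2 J D, 0 < G.val δ (randomStrat I C) τ := by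
    intro δ hδ τ
    obtain ⟨n, hn⟩ := G.not_gfp_exists L hnot
    obtain ⟨m, h, hvis, hpos⟩ := G.main_reach n δ τ (by rwa [hδ])
    have hreach : 0 < G.reachProb δ (randomStrat I C) τ m := by
      rw [Game.reachProb]
      have hle : (if h.visits G.T then G.playProb δ (randomStrat I C) τ m h else 0) ≤
          ∑ h' : Hist K C D m,
            if h'.visits G.T then G.playProb δ (randomStrat I C) τ m h' else 0 :=
        Finset.single_le_sum (f := fun h' => if h'.visits G.T then
            G.playProb δ (randomStrat I C) τ m h' else 0)
          (fun h' _ => by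
            split
            · exact G.playProb_nonneg δ (randomStrat I C) τ m h'
            · exact le_refl 0)
          (Finset.mem_univ h)
      rw [if_pos hvis] at hle
      exact lt_of_lt_of_le hpos hle
    have hb : BddAbove (Set.range fun n => G.reachProb δ (randomStrat I C) τ n) := by
      refine ⟨1, ?_⟩
      rintro _ ⟨n', rfl⟩
      exact G.reachProb_le_one δ (randomStrat I C) τ n'
    exact lt_of_lt_of_le hreach (le_ciSup hb m)
  exact ⟨main, randomStrat I C, fun τ => main _ (uniform_support L hL) τ⟩
end
end
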